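/- With the Hoeffding decomposition, E[v_{(i·)} · v̄_{(ij)} | w_j] = (1/2)(1/3 - v_{(j·)}²) almost surely. -/

import Mathlib

open MeasureTheory ProbabilityTheory Set

section Statement4Aux

theorem aux_sign_meas : Measurable Real.sign := by
  have h : Real.sign = fun r : ℝ => if r < 0 then (-1:ℝ) else if 0 < r then 1 else 0 :=
    funext fun r => rfl
  rw [h]
  exact Measurable.ite (measurableSet_lt measurable_id measurable_const) measurable_const
    (Measurable.ite (measurableSet_lt measurable_const measurable_id) measurable_const
      measurable_const)

theorem aux_sign_abs_le (x : ℝ) : |Real.sign x| ≤ 1 := by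
  rcases lt_trichotomy x 0 with h | h | h
  · rw [Real.sign_of_neg h]; norm_num
  · rw [h, Real.sign_zero]; norm_num
  · rw [Real.sign_of_pos h]; norm_num

variable {ν : Measure ℝ} [IsProbabilityMeasure ν] {F : ℝ → ℝ}

theorem aux_F_nonneg (hF' : ∀ x, F x = (ν (Iic x)).toReal) (x : ℝ) : 0 ≤ F x := by
  rw [hF']; exact ENNReal.toReal_nonneg

theorem aux_F_le_one (hF' : ∀ x, F x = (ν (Iic x)).toReal) (x : ℝ) : F x ≤ 1 := by
  rw [hF']
  have := ENNReal.toReal_mono (measure_ne_top ν univ) (measure_mono (subset_univ (Iic x)))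
  simpa using this

theorem aux_intgF (hF' : ∀ x, F x = (ν (Iic x)).toReal) (hFm : Measurable F) :
    Integrable F ν :=
  Integrable.mono' (integrable_const 1) hFm.aestronglyMeasurable
    (ae_of_all _ fun x => by
      rw [Real.norm_eq_abs, abs_of_nonneg (aux_F_nonneg hF' x)]
      exact aux_F_le_one hF' x)

theorem aux_noatom (hF' : ∀ x, F x = (ν (Iic x)).toReal) (hFc : Continuous F) :
    ∀ y : ℝ, ν {y} = 0 := by
  intro y
  by_contra h
  have hfin : ν {y} ≠ ⊤ := measure_ne_top ν _
  have hc : 0 < (ν {y}).toReal := ENNReal.toReal_pos h hfin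
  obtain ⟨δ, hδ, hδ2⟩ : ∃ δ > 0, ∀ z, dist z y < δ → dist (F z) (F y) < (ν {y}).toReal :=
    Metric.continuous_iff.mp hFc y _ hc
  set z := y - δ/2 with hz
  have hzy : z < y := by rw [hz]; linarith
  have hsub : Iic z ⊆ Iic y := fun a ha => le_of_lt (lt_of_le_of_lt ha hzy)
  have hdist : dist z y < δ := by
    rw [Real.dist_eq, hz, abs_of_neg (by linarith : y - δ/2 - y < 0)]
    linarith
  have hle : ν {y} ≤ ν (Iic y) - ν (Iic z) := by
    have hss : {y} ⊆ Iic y \ Iic z := by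
      intro a ha
      simp only [mem_singleton_iff] at ha
      subst ha
      exact ⟨mem_Iic.mpr le_rfl, fun hmem => absurd (mem_Iic.mp hmem) (not_le.mpr hzy)⟩
    calc ν {y} ≤ ν (Iic y \ Iic z) := measure_mono hss
    _ = ν (Iic y) - ν (Iic z) :=
      measure_diff hsub measurableSet_Iic.nullMeasurableSet (measure_ne_top ν _)
  have h2 : (ν {y}).toReal ≤ F y - F z := by
    rw [hF' y, hF' z]
    have h4 := ENNReal.toReal_mono
      ((tsub_le_self.trans_lt (measure_lt_top ν (Iic y))).ne) hle
    rwa [ENNReal.toReal_sub_of_le (measure_mono hsub) (measure_ne_top ν _)] at h4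
  have h3 : dist (F z) (F y) < (ν {y}).toReal := hδ2 z hdist
  have hFzy : F z ≤ F y := by
    rw [hF' y, hF' z]
    exact ENNReal.toReal_mono (measure_ne_top ν _) (measure_mono hsub)
  rw [Real.dist_eq, abs_of_nonpos (by linarith)] at h3
  linarith

theorem aux_Ici (hF' : ∀ x, F x = (ν (Iic x)).toReal) (hna : ∀ y : ℝ, ν {y} = 0)
    (z : ℝ) : (ν (Ici z)).toReal = 1 - F z := by
  haveI : NullSingletonClass ν := ⟨hna⟩
  have h1 : ν (Ici z) = 1 - ν (Iic z) := by
    rw [← compl_Iio, measure_compl measurableSet_Iio (measure_ne_top ν _),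
      measure_congr Iio_ae_eq_Iic, measure_univ]
  rw [h1, hF', ENNReal.toReal_sub_of_le prob_le_one (by simp)]
  simp

theorem aux_K1 (hF' : ∀ x, F x = (ν (Iic x)).toReal) (hFm : Measurable F)
    (hna : ∀ y : ℝ, ν {y} = 0) (y : ℝ) :
    ∫ x in Iic y, F x ∂ν = F y ^ 2 / 2 := by
  haveI : NullSingletonClass ν := ⟨hna⟩
  set S : Set (ℝ × ℝ) := {p | p.2 ≤ p.1 ∧ p.1 ≤ y} with hSdef
  have hS : MeasurableSet S :=
    (measurableSet_le measurable_snd measurable_fst).inter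
      (measurableSet_le measurable_fst measurable_const)
  have hint : Integrable (S.indicator fun _ => (1 : ℝ)) (ν.prod ν) :=
    (integrable_const 1).indicator hS
  have h1 : ∫ p, S.indicator (fun _ => (1:ℝ)) p ∂(ν.prod ν)
      = ∫ x in Iic y, F x ∂ν := by
    rw [integral_prod _ hint]
    have hinner : ∀ x : ℝ, ∫ z, S.indicator (fun _ => (1:ℝ)) (x, z) ∂ν
        = (Iic y).indicator F x := by
      intro x
      by_cases hx : x ≤ y
      · have : (fun z => S.indicator (fun _ => (1:ℝ)) (x, z))
            = (Iic x).indicator (fun _ => (1:ℝ)) := by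
          funext z
          simp only [Set.indicator_apply, hSdef, mem_setOf_eq, mem_Iic, hx, and_true]
        rw [this, integral_indicator measurableSet_Iic, setIntegral_const, measureReal_def, smul_eq_mul,
          mul_one, indicator_of_mem (mem_Iic.mpr hx), hF']
      · have : (fun z => S.indicator (fun _ => (1:ℝ)) (x, z)) = fun _ => (0:ℝ) := by
          funext z
          simp only [Set.indicator_apply, hSdef, mem_setOf_eq, hx, and_false, if_false]
        rw [this, integral_zero, indicator_of_notMem (by simpa using hx)]
    rw [funext hinner, integral_indicator measurableSet_Iic]
  have h2 : ∫ p, S.indicator (fun _ => (1:ℝ)) p ∂(ν.prod ν)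
      = F y ^ 2 - ∫ x in Iic y, F x ∂ν := by
    rw [integral_prod_symm _ hint]
    have hinner : ∀ z : ℝ, ∫ x, S.indicator (fun _ => (1:ℝ)) (x, z) ∂ν
        = (Iic y).indicator (fun z => F y - F z) z := by
      intro z
      by_cases hz : z ≤ y
      · have : (fun x => S.indicator (fun _ => (1:ℝ)) (x, z))
            = (Icc z y).indicator (fun _ => (1:ℝ)) := by
          funext x
          simp only [Set.indicator_apply, hSdef, mem_setOf_eq, mem_Icc]
        rw [this, integral_indicator measurableSet_Icc, setIntegral_const, measureReal_def, smul_eq_mul,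
          mul_one, indicator_of_mem (mem_Iic.mpr hz)]
        have hIcc : Icc z y = Iic y \ Iio z := by
          ext a; simp only [mem_Icc, mem_diff, mem_Iic, mem_Iio, not_lt]
          tauto
        have hmd : ν (Iic y \ Iio z) = ν (Iic y) - ν (Iio z) :=
          measure_diff (fun a ha => le_of_lt (lt_of_lt_of_le ha hz))
            measurableSet_Iio.nullMeasurableSet (measure_ne_top ν _)
        rw [hIcc, hmd, measure_congr Iio_ae_eq_Iic,
          ENNReal.toReal_sub_of_le (measure_mono (Iic_subset_Iic.mpr hz)) (measure_ne_top ν _),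
          hF', hF']
      · have : (fun x => S.indicator (fun _ => (1:ℝ)) (x, z)) = fun _ => (0:ℝ) := by
          funext x
          simp only [Set.indicator_apply, hSdef, mem_setOf_eq]
          rw [if_neg]
          rintro ⟨h1, h2⟩
          exact hz (h1.trans h2)
        rw [this, integral_zero, indicator_of_notMem (by simpa using hz)]
    rw [funext hinner, integral_indicator measurableSet_Iic]
    rw [integral_sub (integrableOn_const (C := F y) (measure_lt_top ν _).ne)
      ((aux_intgF hF' hFm).integrableOn)]
    rw [setIntegral_const, measureReal_def, smul_eq_mul, hF', sq]
  have := h1.symm.trans h2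
  linarith

theorem aux_intF (hF' : ∀ x, F x = (ν (Iic x)).toReal) (hFm : Measurable F)
    (hna : ∀ y : ℝ, ν {y} = 0) : ∫ x, F x ∂ν = 1 / 2 := by
  haveI : NullSingletonClass ν := ⟨hna⟩
  set S : Set (ℝ × ℝ) := {p | p.2 ≤ p.1} with hSdef
  have hS : MeasurableSet S := measurableSet_le measurable_snd measurable_fst
  have hint : Integrable (S.indicator fun _ => (1 : ℝ)) (ν.prod ν) :=
    (integrable_const 1).indicator hS
  have h1 : ∫ p, S.indicator (fun _ => (1:ℝ)) p ∂(ν.prod ν) = ∫ x, F x ∂ν := by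
    rw [integral_prod _ hint]
    congr 1; funext x
    have : (fun z => S.indicator (fun _ => (1:ℝ)) (x, z))
        = (Iic x).indicator (fun _ => (1:ℝ)) := by
      funext z
      simp only [Set.indicator_apply, hSdef, mem_setOf_eq, mem_Iic]
    rw [this, integral_indicator measurableSet_Iic, setIntegral_const, measureReal_def, smul_eq_mul,
      mul_one, hF']
  have h2 : ∫ p, S.indicator (fun _ => (1:ℝ)) p ∂(ν.prod ν) = 1 - ∫ x, F x ∂ν := by
    rw [integral_prod_symm _ hint]
    have hinner : ∀ z : ℝ, ∫ x, S.indicator (fun _ => (1:ℝ)) (x, z) ∂ν = 1 - F z := by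
      intro z
      have : (fun x => S.indicator (fun _ => (1:ℝ)) (x, z))
          = (Ici z).indicator (fun _ => (1:ℝ)) := by
        funext x
        simp only [Set.indicator_apply, hSdef, mem_setOf_eq, mem_Ici]
      rw [this, integral_indicator measurableSet_Ici, setIntegral_const, measureReal_def, smul_eq_mul,
        mul_one, aux_Ici hF' hna]
    rw [funext hinner, integral_sub (integrable_const 1) (aux_intgF hF' hFm),
      integral_const]
    simp
  have := h1.symm.trans h2
  linarith

theorem aux_intF2 (hF' : ∀ x, F x = (ν (Iic x)).toReal) (hFm : Measurable F)
    (hna : ∀ y : ℝ, ν {y} = 0) : ∫ x, F x ^ 2 ∂ν = 1 / 3 := by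
  haveI : NullSingletonClass ν := ⟨hna⟩
  set S : Set (ℝ × ℝ) := {p | p.2 ≤ p.1} with hSdef
  have hS : MeasurableSet S := measurableSet_le measurable_snd measurable_fst
  have hintbase : Integrable (fun p : ℝ × ℝ => F p.2) (ν.prod ν) :=
    Integrable.mono' (integrable_const 1)
      (hFm.comp measurable_snd).aestronglyMeasurable
      (ae_of_all _ fun p => by
        rw [Real.norm_eq_abs, abs_of_nonneg (aux_F_nonneg hF' _)]
        exact aux_F_le_one hF' _)
  have hint : Integrable (S.indicator fun p : ℝ × ℝ => F p.2) (ν.prod ν) :=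
    hintbase.indicator hS
  have hintF2 : Integrable (fun x => F x ^ 2) ν :=
    Integrable.mono' (integrable_const 1) (hFm.pow_const 2).aestronglyMeasurable
      (ae_of_all _ fun x => by
        rw [Real.norm_eq_abs, abs_of_nonneg (sq_nonneg _), sq]
        exact mul_le_one₀ (aux_F_le_one hF' x) (aux_F_nonneg hF' x) (aux_F_le_one hF' x))
  have h1 : ∫ p, S.indicator (fun p : ℝ × ℝ => F p.2) p ∂(ν.prod ν)
      = ∫ x, F x ^ 2 / 2 ∂ν := by
    rw [integral_prod _ hint]
    congr 1; funext x
    have : (fun z => S.indicator (fun p : ℝ × ℝ => F p.2) (x, z))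
        = (Iic x).indicator F := by
      funext z
      simp only [Set.indicator_apply, hSdef, mem_setOf_eq, mem_Iic]
    rw [this, integral_indicator measurableSet_Iic, aux_K1 hF' hFm hna]
  have h2 : ∫ p, S.indicator (fun p : ℝ × ℝ => F p.2) p ∂(ν.prod ν)
      = ∫ z, F z * (1 - F z) ∂ν := by
    rw [integral_prod_symm _ hint]
    congr 1; funext z
    have : (fun x => S.indicator (fun p : ℝ × ℝ => F p.2) (x, z))
        = (Ici z).indicator (fun _ => F z) := by
      funext x
      simp only [Set.indicator_apply, hSdef, mem_setOf_eq, mem_Ici]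
    rw [this, integral_indicator measurableSet_Ici, setIntegral_const, measureReal_def, smul_eq_mul,
      aux_Ici hF' hna, mul_comm]
  have h3 : ∫ x, F x ^ 2 / 2 ∂ν = (∫ x, F x ^ 2 ∂ν) / 2 := by
    rw [integral_div]
  have h4 : ∫ z, F z * (1 - F z) ∂ν = ∫ z, F z ∂ν - ∫ z, F z ^ 2 ∂ν := by
    rw [← integral_sub (aux_intgF hF' hFm) hintF2]
    congr 1; funext z; ring
  have h5 := (h1.symm.trans h2)
  rw [h3, h4, aux_intF hF' hFm hna] at h5
  linarith

theorem aux_inner (hF' : ∀ x, F x = (ν (Iic x)).toReal) (hFm : Measurable F)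
    (hna : ∀ y : ℝ, ν {y} = 0) (y : ℝ) :
    ∫ x, (2 * F x - 1) * (Real.sign (x - y) - ((2 * F x - 1) - (2 * F y - 1))) ∂ν
      = 1 / 2 * (1 / 3 - (2 * F y - 1) ^ 2) := by
  haveI : NullSingletonClass ν := ⟨hna⟩
  have h21 : Integrable (fun x => 2 * F x - 1) ν :=
    ((aux_intgF hF' hFm).const_mul 2).sub (integrable_const 1)
  have habs : ∀ x, |2 * F x - 1| ≤ 1 := fun x => by
    rw [abs_le]
    constructor <;> [linarith [aux_F_nonneg hF' x]; linarith [aux_F_le_one hF' x]]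
  have hIic21 : ∫ x in Iic y, (2 * F x - 1) ∂ν = F y ^ 2 - F y := by
    rw [integral_sub (((aux_intgF hF' hFm).integrableOn).const_mul 2)
      (integrableOn_const (measure_lt_top ν _).ne),
      integral_const_mul 2, aux_K1 hF' hFm hna, setIntegral_const, measureReal_def, smul_eq_mul, mul_one, hF']
    ring
  have htot21 : ∫ x, (2 * F x - 1) ∂ν = 0 := by
    rw [integral_sub ((aux_intgF hF' hFm).const_mul 2) (integrable_const 1),
      integral_const_mul 2, aux_intF hF' hFm hna, integral_const]
    simp
  have hIoi21 : ∫ x in Ioi y, (2 * F x - 1) ∂ν = -(F y ^ 2 - F y) := by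
    have := integral_add_compl (s := Iic y) measurableSet_Iic h21
    rw [compl_Iic, hIic21, htot21] at this
    linarith
  have hIio21 : ∫ x in Iio y, (2 * F x - 1) ∂ν = F y ^ 2 - F y := by
    rw [setIntegral_congr_set Iio_ae_eq_Iic, hIic21]
  have hpt : ∀ x, (2 * F x - 1) * (Real.sign (x - y) - ((2 * F x - 1) - (2 * F y - 1)))
      = ((Ioi y).indicator (fun x => 2 * F x - 1) x
        - (Iio y).indicator (fun x => 2 * F x - 1) x)
        - (2 * F x - 1) ^ 2 + (2 * F y - 1) * (2 * F x - 1) := by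
    intro x
    have hsgn : (2 * F x - 1) * Real.sign (x - y)
        = (Ioi y).indicator (fun x => 2 * F x - 1) x
          - (Iio y).indicator (fun x => 2 * F x - 1) x := by
      rcases lt_trichotomy x y with h | h | h
      · rw [Real.sign_of_neg (by linarith), indicator_of_notMem (by simpa using le_of_lt h),
          indicator_of_mem (mem_Iio.mpr h)]
        ring
      · subst h
        rw [sub_self, Real.sign_zero, indicator_of_notMem (by simp),
          indicator_of_notMem (by simp)]
        ring
      · rw [Real.sign_of_pos (by linarith), indicator_of_mem (mem_Ioi.mpr h),
          indicator_of_notMem (by simpa using le_of_lt h)]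
        ring
    rw [← hsgn]; ring
  rw [integral_congr_ae (ae_of_all _ hpt)]
  have hg1 : Integrable ((Ioi y).indicator fun x => 2 * F x - 1) ν :=
    h21.indicator measurableSet_Ioi
  have hg2 : Integrable ((Iio y).indicator fun x => 2 * F x - 1) ν :=
    h21.indicator measurableSet_Iio
  have hm21 : Measurable (fun x => 2 * F x - 1) := (hFm.const_mul 2).sub measurable_const
  have hg3 : Integrable (fun x => (2 * F x - 1) ^ 2) ν :=
    Integrable.mono' (integrable_const 1) (hm21.pow_const 2).aestronglyMeasurable
      (ae_of_all _ fun x => by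
        rw [Real.norm_eq_abs, abs_of_nonneg (sq_nonneg _)]
        nlinarith [habs x, abs_nonneg (2 * F x - 1), abs_mul_abs_self (2 * F x - 1)])
  have hg4 : Integrable (fun x => (2 * F y - 1) * (2 * F x - 1)) ν := h21.const_mul _
  have hintF2 : Integrable (fun x => F x ^ 2) ν :=
    Integrable.mono' (integrable_const 1) (hFm.pow_const 2).aestronglyMeasurable
      (ae_of_all _ fun x => by
        rw [Real.norm_eq_abs, abs_of_nonneg (sq_nonneg _), sq]
        exact mul_le_one₀ (aux_F_le_one hF' x) (aux_F_nonneg hF' x) (aux_F_le_one hF' x))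
  have hsq : ∫ x, (2 * F x - 1) ^ 2 ∂ν = 1 / 3 := by
    have hfe : (fun x => (2 * F x - 1) ^ 2) = fun x => 4 * F x ^ 2 - 4 * F x + 1 :=
      funext fun x => by ring
    have hA : Integrable (fun x => 4 * F x ^ 2 - 4 * F x) ν :=
      (hintF2.const_mul 4).sub ((aux_intgF hF' hFm).const_mul 4)
    rw [hfe, integral_add hA (integrable_const 1),
      integral_sub (hintF2.const_mul 4) ((aux_intgF hF' hFm).const_mul 4),
      integral_const_mul 4, integral_const_mul 4, aux_intF2 hF' hFm hna,
      aux_intF hF' hFm hna, integral_const]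
    simp
    norm_num
  have hB : Integrable (fun x => (Ioi y).indicator (fun x => 2 * F x - 1) x
      - (Iio y).indicator (fun x => 2 * F x - 1) x) ν := hg1.sub hg2
  have hC : Integrable (fun x => ((Ioi y).indicator (fun x => 2 * F x - 1) x
      - (Iio y).indicator (fun x => 2 * F x - 1) x) - (2 * F x - 1) ^ 2) ν := hB.sub hg3
  rw [integral_add hC hg4, integral_sub hB hg3, integral_sub hg1 hg2,
    integral_indicator measurableSet_Ioi,
    integral_indicator measurableSet_Iio, hIoi21, hIio21, hsq,
    integral_const_mul _, htot21]
  ring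

end Statement4Aux

/-- For the Hoeffding decomposition, `E[v₍ᵢ·₎ · v̄₍ᵢⱼ₎ | wⱼ] = (1/2)(1/3 - v₍ⱼ·₎²)`
almost surely, where `v₍ᵢ·₎ = 2F(wᵢ)-1` and `v₍ⱼ·₎ = 2F(wⱼ)-1`. -/
theorem statement4 {Ω : Type*} [MeasurableSpace Ω] (μ : Measure Ω) [IsProbabilityMeasure μ]
    (wi wj : Ω → ℝ) (hi : Measurable wi) (hj : Measurable wj)
    (hindep : IndepFun wi wj μ)
    (hid : Measure.map wi μ = Measure.map wj μ)
    (F : ℝ → ℝ) (hF : ∀ x, F x = (μ {ω | wi ω ≤ x}).toReal)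
    (hFc : Continuous F)
    (vbar : Ω → ℝ)
    (hvbar : ∀ ω, vbar ω =
      Real.sign (wi ω - wj ω) - ((2 * F (wi ω) - 1) - (2 * F (wj ω) - 1))) :
    μ[(fun ω => (2 * F (wi ω) - 1) * vbar ω) | MeasurableSpace.comap wj inferInstance]
      =ᵐ[μ] fun ω => (1 / 2) * (1 / 3 - (2 * F (wj ω) - 1) ^ 2) := by
  set ν := Measure.map wj μ with hν
  haveI : IsProbabilityMeasure ν := Measure.isProbabilityMeasure_map hj.aemeasurable
  have hF' : ∀ x, F x = (ν (Iic x)).toReal := by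
    intro x
    rw [hF x, ← hid, Measure.map_apply hi measurableSet_Iic]
    rfl
  have hFm : Measurable F := hFc.measurable
  have hna := aux_noatom hF' hFc
  have hm : MeasurableSpace.comap wj inferInstance ≤ _ := hj.comap_le
  haveI : IsFiniteMeasure (μ.trim hm) := isFiniteMeasure_trim hm
  -- the joint law
  have hpairm : Measurable (fun ω => (wi ω, wj ω)) := hi.prodMk hj
  have hmap : μ.map (fun ω => (wi ω, wj ω)) = ν.prod ν := by
    rw [(indepFun_iff_map_prod_eq_prod_map_map hi.aemeasurable hj.aemeasurable).mp hindep,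
      hid]
  -- the two functions
  set G : ℝ × ℝ → ℝ := fun p =>
    (2 * F p.1 - 1) * (Real.sign (p.1 - p.2) - ((2 * F p.1 - 1) - (2 * F p.2 - 1)))
    with hGdef
  set h : ℝ → ℝ := fun y => 1 / 2 * (1 / 3 - (2 * F y - 1) ^ 2) with hhdef
  have hhm : Measurable h := by
    apply Measurable.const_mul
    exact (measurable_const.sub (((hFm.const_mul 2).sub measurable_const).pow_const 2))
  have hGm : Measurable G := by
    apply Measurable.mul
    · exact ((hFm.comp measurable_fst).const_mul 2).sub measurable_const
    · exact ((aux_sign_meas.comp (measurable_fst.sub measurable_snd)).sub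
        ((((hFm.comp measurable_fst).const_mul 2).sub measurable_const).sub
          (((hFm.comp measurable_snd).const_mul 2).sub measurable_const)))
  have hGb : ∀ p, ‖G p‖ ≤ 3 := by
    intro p
    rw [hGdef, Real.norm_eq_abs, abs_mul]
    have h1 : |2 * F p.1 - 1| ≤ 1 := by
      rw [abs_le]
      constructor <;> [linarith [aux_F_nonneg hF' p.1]; linarith [aux_F_le_one hF' p.1]]
    have h2 : |2 * F p.2 - 1| ≤ 1 := by
      rw [abs_le]
      constructor <;> [linarith [aux_F_nonneg hF' p.2]; linarith [aux_F_le_one hF' p.2]]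
    have h3 : |Real.sign (p.1 - p.2) - ((2 * F p.1 - 1) - (2 * F p.2 - 1))| ≤ 3 := by
      have hs := abs_le.mp (aux_sign_abs_le (p.1 - p.2))
      have ha := abs_le.mp h1
      have hb := abs_le.mp h2
      rw [abs_le]
      constructor <;> linarith [hs.1, hs.2, ha.1, ha.2, hb.1, hb.2]
    calc |2 * F p.1 - 1| * |Real.sign (p.1 - p.2) - ((2 * F p.1 - 1) - (2 * F p.2 - 1))|
        ≤ 1 * 3 := mul_le_mul h1 h3 (abs_nonneg _) zero_le_one
    _ = 3 := by norm_num
  have hfeq : (fun ω => (2 * F (wi ω) - 1) * vbar ω) = fun ω => G (wi ω, wj ω) :=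
    funext fun ω => by rw [hvbar ω]
  have hf_int : Integrable (fun ω => (2 * F (wi ω) - 1) * vbar ω) μ := by
    rw [hfeq]
    exact Integrable.mono' (integrable_const 3)
      ((hGm.comp hpairm).aestronglyMeasurable)
      (ae_of_all _ fun ω => hGb _)
  have hhb : ∀ y, ‖h y‖ ≤ 1 := by
    intro y
    rw [hhdef, Real.norm_eq_abs]
    have h2 : |2 * F y - 1| ≤ 1 := by
      rw [abs_le]
      constructor <;> [linarith [aux_F_nonneg hF' y]; linarith [aux_F_le_one hF' y]]
    have h4 : 0 ≤ (2 * F y - 1) ^ 2 := sq_nonneg _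
    have h5 : (2 * F y - 1) ^ 2 ≤ 1 := by nlinarith [abs_nonneg (2 * F y - 1), abs_mul_abs_self (2 * F y - 1)]
    rw [abs_le]
    constructor <;> simp only <;> nlinarith
  have hg_int : Integrable (fun ω => h (wj ω)) μ :=
    Integrable.mono' (integrable_const 1) ((hhm.comp hj).aestronglyMeasurable)
      (ae_of_all _ fun ω => hhb _)
  have hgm : AEStronglyMeasurable[MeasurableSpace.comap wj inferInstance]
      (fun ω => h (wj ω)) μ := by
    have hwjm : @Measurable Ω ℝ (MeasurableSpace.comap wj inferInstance) _ wj :=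
      Measurable.of_comap_le le_rfl
    exact StronglyMeasurable.aestronglyMeasurable (hhm.comp hwjm).stronglyMeasurable
  have key : (fun ω => h (wj ω)) =ᵐ[μ]
      μ[(fun ω => (2 * F (wi ω) - 1) * vbar ω) | MeasurableSpace.comap wj inferInstance] := by
    refine ae_eq_condExp_of_forall_setIntegral_eq hm hf_int
      (fun s _ _ => hg_int.integrableOn) (fun s hs _ => ?_) hgm
    obtain ⟨t, ht, rfl⟩ := hs
    -- LHS
    have hL : ∫ ω in wj ⁻¹' t, h (wj ω) ∂μ = ∫ y in t, h y ∂ν :=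
      (setIntegral_map ht hhm.aestronglyMeasurable hj.aemeasurable).symm
    -- RHS
    have hset : wj ⁻¹' t = (fun ω => (wi ω, wj ω)) ⁻¹' (univ ×ˢ t) := by
      ext ω; simp
    have hGprod_int : Integrable G (ν.prod (ν.restrict t)) := by
      haveI : IsFiniteMeasure (ν.restrict t) := by
        constructor
        rw [Measure.restrict_apply_univ]
        exact measure_lt_top ν t
      exact Integrable.mono' (integrable_const 3) hGm.aestronglyMeasurable
        (ae_of_all _ fun p => hGb _)
    have hGae : AEStronglyMeasurable G (μ.map fun ω => (wi ω, wj ω)) :=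
      hGm.aestronglyMeasurable
    have hrp : (ν.prod ν).restrict (univ ×ˢ t) = ν.prod (ν.restrict t) := by
      rw [← Measure.prod_restrict, Measure.restrict_univ]
    have hR : ∫ ω in wj ⁻¹' t, (2 * F (wi ω) - 1) * vbar ω ∂μ = ∫ y in t, h y ∂ν := by
      have h0 : ∫ ω in wj ⁻¹' t, (2 * F (wi ω) - 1) * vbar ω ∂μ
          = ∫ p in univ ×ˢ t, G p ∂(ν.prod ν) := by
        rw [hfeq, ← hmap,
          setIntegral_map (MeasurableSet.prod MeasurableSet.univ ht) hGae
            hpairm.aemeasurable, ← hset]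
      rw [h0]
      have h1 : ∫ p in univ ×ˢ t, G p ∂(ν.prod ν) = ∫ p, G p ∂(ν.prod (ν.restrict t)) := by
        rw [← hrp]
      rw [h1, integral_prod_symm _ hGprod_int]
      exact setIntegral_congr_ae ht
        (ae_of_all _ fun y _ => aux_inner hF' hFm hna y)
    rw [hL, hR]
  exact key.symm
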